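/- Let S be a finite type with |S| = n ≥ 1, let P, Q be row-stochastic matrices on S with |P(s,s') − Q(s,s')| ≤ c·Δ/n for all s, s', and let μ₀, ν₀ be probability mass functions on S. Define μ_t = μ₀ P^t and ν_t = ν₀ Q^t (iterated pushforwards). Then for every t ∈ ℕ, D_TV(μ_t, ν_t) ≤ t·c·Δ/2 + D_TV(μ₀, ν₀). -/
import Mathlib


/-- One-step pushforward of a mass function through a kernel. -/
def pushforward {S : Type*} [Fintype S] (μ : S → ℝ) (P : S → S → ℝ) : S → ℝ :=
  fun s' => ∑ s, μ s * P s s'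

/-- Iterated pushforward: μ P^t. -/
def iterPush {S : Type*} [Fintype S] (μ : S → ℝ) (P : S → S → ℝ) : ℕ → S → ℝ
  | 0 => μ
  | t + 1 => pushforward (iterPush μ P t) P

theorem stmt_7 {S : Type*} [Fintype S] (n : ℕ) (hcard : Fintype.card S = n) (hn : 1 ≤ n)
    (P Q : S → S → ℝ) (c Δ : ℝ) (hc : 0 ≤ c) (hΔ : 0 ≤ Δ)
    (hP0 : ∀ s s', 0 ≤ P s s') (hP1 : ∀ s, ∑ s', P s s' = 1)
    (hQ0 : ∀ s s', 0 ≤ Q s s') (hQ1 : ∀ s, ∑ s', Q s s' = 1)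
    (hPQ : ∀ s s', |P s s' - Q s s'| ≤ c * Δ / n)
    (μ₀ ν₀ : S → ℝ) (hμ0 : ∀ s, 0 ≤ μ₀ s) (hμ1 : ∑ s, μ₀ s = 1)
    (hν0 : ∀ s, 0 ≤ ν₀ s) (hν1 : ∑ s, ν₀ s = 1) :
    ∀ t : ℕ,
      (1 / 2) * ∑ s, |iterPush μ₀ P t s - iterPush ν₀ Q t s| ≤
        t * c * Δ / 2 + (1 / 2) * ∑ s, |μ₀ s - ν₀ s| := by
  have hnpos : (0:ℝ) < n := by exact_mod_cast hn
  -- ν_t is nonnegative and sums to 1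
  have hνNN : ∀ t s, 0 ≤ iterPush ν₀ Q t s := by
    intro t
    induction t with
    | zero => exact hν0
    | succ t ih =>
      intro s'
      exact Finset.sum_nonneg fun s _ => mul_nonneg (ih s) (hQ0 s s')
  have hνSum : ∀ t, ∑ s, iterPush ν₀ Q t s = 1 := by
    intro t
    induction t with
    | zero => exact hν1
    | succ t ih =>
      show ∑ s', ∑ s, iterPush ν₀ Q t s * Q s s' = 1
      rw [Finset.sum_comm]
      calc ∑ s, ∑ s', iterPush ν₀ Q t s * Q s s'
          = ∑ s, iterPush ν₀ Q t s * 1 := by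
            refine Finset.sum_congr rfl fun s _ => ?_
            rw [← Finset.mul_sum, hQ1]
        _ = 1 := by simpa using ih
  intro t
  induction t with
  | zero => simp [iterPush]
  | succ t ih =>
    have key : ∑ s', |iterPush μ₀ P (t+1) s' - iterPush ν₀ Q (t+1) s'| ≤
        (∑ s, |iterPush μ₀ P t s - iterPush ν₀ Q t s|) + c * Δ := by
      set μ := iterPush μ₀ P t
      set ν := iterPush ν₀ Q t
      have step1 : ∀ s', |iterPush μ₀ P (t+1) s' - iterPush ν₀ Q (t+1) s'| ≤
          ∑ s, (|μ s - ν s| * P s s' + ν s * |P s s' - Q s s'|) := by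
        intro s'
        have : iterPush μ₀ P (t+1) s' - iterPush ν₀ Q (t+1) s' =
            ∑ s, ((μ s - ν s) * P s s' + ν s * (P s s' - Q s s')) := by
          show (∑ s, μ s * P s s') - (∑ s, ν s * Q s s') = _
          rw [← Finset.sum_sub_distrib]
          refine Finset.sum_congr rfl fun s _ => ?_
          ring
        rw [this]
        refine (Finset.abs_sum_le_sum_abs _ _).trans ?_
        refine Finset.sum_le_sum fun s _ => ?_
        refine (abs_add_le _ _).trans ?_
        rw [abs_mul, abs_mul, abs_of_nonneg (hP0 s s'), abs_of_nonneg (hνNN t s)]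
      calc ∑ s', |iterPush μ₀ P (t+1) s' - iterPush ν₀ Q (t+1) s'|
          ≤ ∑ s', ∑ s, (|μ s - ν s| * P s s' + ν s * |P s s' - Q s s'|) :=
            Finset.sum_le_sum fun s' _ => step1 s'
        _ = ∑ s, ∑ s', (|μ s - ν s| * P s s' + ν s * |P s s' - Q s s'|) :=
            Finset.sum_comm
        _ = ∑ s, (|μ s - ν s| * (∑ s', P s s') + ν s * ∑ s', |P s s' - Q s s'|) := by
            refine Finset.sum_congr rfl fun s _ => ?_
            rw [Finset.sum_add_distrib, Finset.mul_sum, Finset.mul_sum]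
        _ ≤ ∑ s, (|μ s - ν s| + ν s * (c * Δ)) := by
            refine Finset.sum_le_sum fun s _ => ?_
            rw [hP1, mul_one]
            gcongr
            · exact hνNN t s
            calc ∑ s', |P s s' - Q s s'| ≤ ∑ s' : S, c * Δ / n :=
                  Finset.sum_le_sum fun s' _ => hPQ s s'
              _ = n * (c * Δ / n) := by
                  rw [Finset.sum_const, Finset.card_univ, hcard]; push_cast; ring
              _ = c * Δ := by field_simp
        _ = (∑ s, |μ s - ν s|) + c * Δ := by
            rw [Finset.sum_add_distrib, ← Finset.sum_mul, hνSum, one_mul]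
    have := key
    push_cast
    nlinarith [ih]
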